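/- Let q and n be integers with 3 ≤ q ≤ n + 1. Then the subset Φ = F_q \ { x ↦ [x ≤ q−2] } (the set of all functions from {0,…,q−1} to 𝔹 except the one whose truth table is 1 1 … 1 0) is n-cell implementable under scenario (∗∗). -/

import Mathlib

/-- The alphabet 𝔹• = {0, 1, ∗, •}. -/
inductive BB : Type
  | zero
  | one
  | star
  | reject
deriving DecidableEq

instance : Fintype BB where
  elems := {BB.zero, BB.one, BB.star, BB.reject}
  complete := by intro x; cases x <;> first | decide | simp

/-- The cell function T : 𝔹• × 𝔹• → 𝔹: T(u,ϑ) = 1 iff u = ∗, or ϑ = ∗,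
or u,ϑ ∈ 𝔹 with u = ϑ. -/
def Tcell : BB → BB → Bool
  | BB.star, _ => true
  | _, BB.star => true
  | BB.zero, BB.zero => true
  | BB.one, BB.one => true
  | _, _ => false

/-- The word-level function T(u,ϑ) = ⋀_{j<n} T(u_j, ϑ_j). -/
def Tword {n : ℕ} (u θ : Fin n → BB) : Bool :=
  decide (∀ j, Tcell (u j) (θ j) = true)

/-- The alphabet 𝔹 = {0,1} ⊆ 𝔹•. -/
def Bcirc : Set BB := {BB.zero, BB.one}

/-- The alphabet 𝔹∗ = {0,1,∗} ⊆ 𝔹•. -/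
def Bstar : Set BB := {BB.zero, BB.one, BB.star}

/-- The full alphabet 𝔹•. -/
def Bdot : Set BB := Set.univ

/-- A family Φ of functions {0,…,q−1} → 𝔹 is n-cell implementable under
scenario (A,B) if there are mappings u : {0,…,q−1} → A^n and ϑ : Φ → B^n
with f(x) = T(u(x), ϑ(f)) for all f ∈ Φ and x. -/
def Implementable (A B : Set BB) (n q : ℕ) (Φ : Set (Fin q → Bool)) : Prop :=
  ∃ u : Fin q → Fin n → BB, ∃ θ : (Fin q → Bool) → Fin n → BB,
    (∀ x j, u x j ∈ A) ∧ (∀ f ∈ Φ, ∀ j, θ f j ∈ B) ∧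
    (∀ f ∈ Φ, ∀ x, f x = Tword (u x) (θ f))

/-- The family 𝓔_q = { x ↦ [x = t] : t ∈ [q⟩ }. -/
def Eset (q : ℕ) : Set (Fin q → Bool) :=
  { f | ∃ t : Fin q, f = fun x => decide (x = t) }

/-- The family 𝓝_q = { x ↦ [x ≠ t] : t ∈ [q⟩ }. -/
def Nset (q : ℕ) : Set (Fin q → Bool) :=
  { f | ∃ t : Fin q, f = fun x => decide (x ≠ t) }

/-- The family 𝓖_q = { x ↦ [x ≥ t] : t ∈ [q⟩ }. -/
def Gset (q : ℕ) : Set (Fin q → Bool) :=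
  { f | ∃ t : Fin q, f = fun x => decide (t ≤ x) }

/-- The family 𝓛_q = { x ↦ [x ≤ t] : t ∈ [q⟩ }. -/
def Lset (q : ℕ) : Set (Fin q → Bool) :=
  { f | ∃ t : Fin q, f = fun x => decide (x ≤ t) }

theorem Tcell_star_left (b : BB) : Tcell BB.star b = true := by
  cases b <;> rfl

theorem iteCases {α : Type} (c : Prop) [Decidable c] (b1 b2 : α) (P : α → Prop)
    (h1 : P b1) (h2 : P b2) : P (if c then b1 else b2) := by
  by_cases h : c
  · rw [if_pos h]; exact h1
  · rw [if_neg h]; exact h2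

theorem Fset_minus_Lq2_implementable_starStar (q n : ℕ)
    (hq : 3 ≤ q) (hqn : q ≤ n + 1) :
    Implementable Bstar Bstar n q
      ({ fun x : Fin q => decide ((x : ℕ) ≤ q - 2) }ᶜ) := by
  have hlast : q - 1 < q := by omega
  have hσlt : ∀ j : ℕ, ¬ (q - 1 ≤ j) → (if j = q - 2 then 0 else j + 1) < q := by
    intro j hj; split <;> omega
  have hjlt : ∀ j : ℕ, ¬ (q - 1 ≤ j) → j < q := by intro j hj; omega
  refine ⟨fun x j =>
      if q - 1 ≤ (j : ℕ) then BB.star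
      else if (x : ℕ) = (j : ℕ) ∨ (x : ℕ) = q - 1 then BB.zero
      else if (x : ℕ) = (if (j : ℕ) = q - 2 then 0 else (j : ℕ) + 1) then BB.one
      else BB.star,
    fun f j =>
      if h : q - 1 ≤ (j : ℕ) then BB.star
      else if f ⟨q - 1, hlast⟩ then
        (if f ⟨(if (j : ℕ) = q - 2 then 0 else (j : ℕ) + 1), hσlt _ h⟩ then BB.star
         else BB.zero)
      else (if f ⟨(j : ℕ), hjlt _ h⟩ then BB.star else BB.one),
    ?_, ?_, ?_⟩
  · intro x j
    simp only [Bstar, Set.mem_insert_iff, Set.mem_singleton_iff]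
    split_ifs <;> simp
  · intro f _ j
    by_cases hj : q - 1 ≤ (j : ℕ)
    · simp only [dif_pos hj]; simp [Bstar]
    · simp only [dif_neg hj]
      refine iteCases _ _ _ (· ∈ Bstar) ?_ ?_ <;>
        refine iteCases _ _ _ (· ∈ Bstar) ?_ ?_ <;> simp [Bstar]
  · intro f hf x
    have hfne : f ≠ (fun y : Fin q => decide ((y : ℕ) ≤ q - 2)) := hf
    simp only [Tword]
    by_cases hL : f ⟨q - 1, hlast⟩ = true
    · by_cases hx : (x : ℕ) = q - 1
      · -- x is the last row, f x = true
        have hxe : x = ⟨q - 1, hlast⟩ := Fin.ext hx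
        conv_lhs => rw [hxe, hL]
        symm; rw [decide_eq_true_eq]
        intro j
        by_cases hj : q - 1 ≤ (j : ℕ)
        · simp only [if_pos hj, dif_pos hj]
          exact Tcell_star_left _
        · rw [if_neg hj, dif_neg hj,
            if_pos (show (x : ℕ) = (j : ℕ) ∨ (x : ℕ) = q - 1 from Or.inr hx),
            if_pos hL]
          exact iteCases _ _ _ (fun b => Tcell BB.zero b = true) rfl rfl
      · by_cases hfx : f x = true
        · rw [hfx]; symm; rw [decide_eq_true_eq]
          intro j
          by_cases hj : q - 1 ≤ (j : ℕ)
          · simp only [if_pos hj, dif_pos hj]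
            exact Tcell_star_left _
          · rw [if_neg hj, dif_neg hj, if_pos hL]
            by_cases h1 : (x : ℕ) = (j : ℕ) ∨ (x : ℕ) = q - 1
            · rw [if_pos h1]
              exact iteCases _ _ _ (fun b => Tcell BB.zero b = true) rfl rfl
            · rw [if_neg h1]
              by_cases h2 : (x : ℕ) = (if (j : ℕ) = q - 2 then 0 else (j : ℕ) + 1)
              · rw [if_pos h2]
                have : f ⟨(if (j : ℕ) = q - 2 then 0 else (j : ℕ) + 1), hσlt _ hj⟩ = f x := by
                  congr 1; exact Fin.ext h2.symm
                rw [this, hfx]; rfl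
              · rw [if_neg h2]; exact Tcell_star_left _
        · rw [Bool.not_eq_true] at hfx
          rw [hfx]; symm; rw [decide_eq_false_iff_not]
          intro hall
          -- witness column j0 = sigma⁻¹(x)
          have hxq : (x : ℕ) < q - 1 := by omega
          set j0n : ℕ := if (x : ℕ) = 0 then q - 2 else (x : ℕ) - 1 with hj0n
          have hj0lt : j0n < q - 1 := by rw [hj0n]; split <;> omega
          have hj0n' : j0n < n := by omega
          have := hall ⟨j0n, hj0n'⟩
          have hjv : ((⟨j0n, hj0n'⟩ : Fin n) : ℕ) = j0n := rfl
          rw [hjv] at this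
          have hnle : ¬ (q - 1 ≤ j0n) := by omega
          rw [if_neg hnle, dif_neg hnle] at this
          have hne1 : ¬ ((x : ℕ) = j0n ∨ (x : ℕ) = q - 1) := by
            rw [hj0n]; push_neg; constructor
            · split <;> omega
            · omega
          rw [if_neg hne1] at this
          have hσx : (x : ℕ) = (if j0n = q - 2 then 0 else j0n + 1) := by
            rw [hj0n]; by_cases h0 : (x : ℕ) = 0
            · rw [if_pos h0, if_pos rfl]; omega
            · rw [if_neg h0, if_neg (by omega), ]; omega
          rw [if_pos hσx, if_pos hL] at this
          have hfσ : f ⟨(if j0n = q - 2 then 0 else j0n + 1), hσlt _ hnle⟩ = false := by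
            have : (⟨(if j0n = q - 2 then 0 else j0n + 1), hσlt _ hnle⟩ : Fin q) = x :=
              Fin.ext hσx.symm
            rw [this, hfx]
          rw [hfσ] at this
          simp [Tcell] at this
    · rw [Bool.not_eq_true] at hL
      by_cases hx : (x : ℕ) = q - 1
      · -- x last row, f x = false; need witness j < q-1 with f j = false
        have hxe : x = ⟨q - 1, hlast⟩ := Fin.ext hx
        conv_lhs => rw [hxe, hL]
        symm; rw [decide_eq_false_iff_not]
        intro hall
        -- first get a zero of f below q-1
        obtain ⟨m, hm, hfm⟩ : ∃ m, ∃ h : m < q - 1, f ⟨m, by omega⟩ = false := by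
          by_contra hc
          push_neg at hc
          apply hfne
          funext y
          by_cases hy : (y : ℕ) = q - 1
          · have : y = ⟨q - 1, hlast⟩ := Fin.ext hy
            rw [this, hL]
            have : ¬ ((q : ℕ) - 1 ≤ q - 2) := by omega
            simp [hy, this]
          · have hylt : (y : ℕ) < q - 1 := by omega
            have := hc (y : ℕ) hylt
            rw [Bool.ne_false_iff] at this
            have hye : (⟨(y : ℕ), by omega⟩ : Fin q) = y := Fin.ext rfl
            rw [hye] at this
            rw [this]
            symm; rw [decide_eq_true_eq]; omega
        have hmn : m < n := by omega
        have := hall ⟨m, hmn⟩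
        have hjv : ((⟨m, hmn⟩ : Fin n) : ℕ) = m := rfl
        rw [hjv] at this
        have hnle : ¬ (q - 1 ≤ m) := by omega
        rw [if_neg hnle, dif_neg hnle,
          if_pos (show (x : ℕ) = m ∨ (x : ℕ) = q - 1 from Or.inr hx),
          if_neg (by rw [hL]; exact Bool.false_ne_true)] at this
        have hfm' : f ⟨m, hjlt _ hnle⟩ = false := hfm
        rw [if_neg (show ¬ (f ⟨m, hjlt _ hnle⟩ = true) by
          rw [hfm']; exact Bool.false_ne_true)] at this
        simp [Tcell] at this
      · by_cases hfx : f x = true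
        · rw [hfx]; symm; rw [decide_eq_true_eq]
          intro j
          by_cases hj : q - 1 ≤ (j : ℕ)
          · simp only [if_pos hj, dif_pos hj]
            exact Tcell_star_left _
          · rw [if_neg hj, dif_neg hj,
              if_neg (show ¬ (f ⟨q-1,hlast⟩ = true) by rw [hL]; exact Bool.false_ne_true)]
            by_cases h1 : (x : ℕ) = (j : ℕ) ∨ (x : ℕ) = q - 1
            · rw [if_pos h1]
              have hxj : (x : ℕ) = (j : ℕ) := h1.resolve_right hx
              have : f ⟨(j : ℕ), hjlt _ hj⟩ = f x := by congr 1; exact Fin.ext hxj.symm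
              rw [this, hfx, if_pos rfl]; rfl
            · rw [if_neg h1]
              refine iteCases _ _ _
                (fun a => Tcell a (if f ⟨(j : ℕ), hjlt _ hj⟩ = true then BB.star
                  else BB.one) = true) ?_ ?_ <;>
                exact iteCases _ _ _ (fun b => Tcell _ b = true) rfl rfl
        · rw [Bool.not_eq_true] at hfx
          rw [hfx]; symm; rw [decide_eq_false_iff_not]
          intro hall
          have hxq : (x : ℕ) < q - 1 := by omega
          have hxn : (x : ℕ) < n := by omega
          have := hall ⟨(x : ℕ), hxn⟩
          have hjv : ((⟨(x : ℕ), hxn⟩ : Fin n) : ℕ) = (x : ℕ) := rfl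
          rw [hjv] at this
          have hnle : ¬ (q - 1 ≤ (x : ℕ)) := by omega
          rw [if_neg hnle, dif_neg hnle, if_pos (Or.inl rfl),
            if_neg (show ¬ (f ⟨q-1,hlast⟩ = true) by rw [hL]; exact Bool.false_ne_true)] at this
          have hfx' : f ⟨(x : ℕ), hjlt _ hnle⟩ = false := by
            have : (⟨(x : ℕ), hjlt _ hnle⟩ : Fin q) = x := Fin.ext rfl
            rw [this, hfx]
          rw [if_neg (by rw [hfx']; exact Bool.false_ne_true)] at this
          simp [Tcell] at this
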